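/- For odd j with 1 ≤ j ≤ d−1 and m > 0: (1 − j/d)^{2m(j+1)} (1 − (j+1)/d)^{2m(d−j−1)} C(d−1, j) ≤ (1 − j/d)^{2md} · d^j/j! ≤ e^{−2mj + j log d}/j!. In particular, with m = (log d + c)/2, each such term is at most e^{−cj}/j!. -/

import Mathlib

open Real

/-- The term of `Σ_II` indexed by odd `j`, with `2m` in the exponents. -/
noncomputable def sigmaIITerm (d j : ℕ) (m : ℝ) : ℝ :=
  (1 - (j : ℝ) / d) ^ (2 * m * ((j : ℝ) + 1)) *
    (1 - ((j : ℝ) + 1) / d) ^ (2 * m * ((d : ℝ) - j - 1)) * (Nat.choose (d - 1) j : ℝ)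

theorem sigmaII_bound (d j : ℕ) (hj : Odd j) (hj1 : 1 ≤ j) (hj2 : j ≤ d - 1) :
    (∀ m : ℝ, 0 < m →
      sigmaIITerm d j m ≤ (1 - (j : ℝ) / d) ^ (2 * m * d) * (d : ℝ) ^ j / (Nat.factorial j) ∧
      (1 - (j : ℝ) / d) ^ (2 * m * d) * (d : ℝ) ^ j / (Nat.factorial j) ≤
        Real.exp (-(2 * m * j) + j * Real.log d) / (Nat.factorial j)) ∧
    (∀ c : ℝ, 0 < c →
      sigmaIITerm d j ((Real.log d + c) / 2) ≤ Real.exp (-(c * j)) / (Nat.factorial j)) := by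
  have hd2 : 2 ≤ d := by omega
  have hjd : j + 1 ≤ d := by omega
  have hdpos : (0:ℝ) < d := by positivity
  have hjdR : (j:ℝ) + 1 ≤ d := by exact_mod_cast hjd
  have hb1 : (0:ℝ) < 1 - (j:ℝ)/d := by
    rw [sub_pos, div_lt_one hdpos]; linarith
  have hb2 : (0:ℝ) ≤ 1 - ((j:ℝ)+1)/d := by
    rw [sub_nonneg, div_le_one hdpos]; exact hjdR
  have hb21 : 1 - ((j:ℝ)+1)/d ≤ 1 - (j:ℝ)/d := by
    gcongr <;> linarith
  have hmain : ∀ m : ℝ, 0 < m →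
      sigmaIITerm d j m ≤ (1 - (j : ℝ) / d) ^ (2 * m * d) * (d : ℝ) ^ j / (Nat.factorial j) ∧
      (1 - (j : ℝ) / d) ^ (2 * m * d) * (d : ℝ) ^ j / (Nat.factorial j) ≤
        Real.exp (-(2 * m * j) + j * Real.log d) / (Nat.factorial j) := by
    intro m hm
    have hexp2 : (0:ℝ) ≤ 2 * m * ((d:ℝ) - j - 1) := by
      apply mul_nonneg (by linarith) (by linarith)
    constructor
    · -- first inequality
      have h1 : (1 - ((j:ℝ)+1)/d) ^ (2 * m * ((d:ℝ) - j - 1)) ≤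
          (1 - (j:ℝ)/d) ^ (2 * m * ((d:ℝ) - j - 1)) :=
        Real.rpow_le_rpow hb2 hb21 hexp2
      have h2 : (1 - (j:ℝ)/d) ^ (2 * m * ((j:ℝ) + 1)) *
          (1 - (j:ℝ)/d) ^ (2 * m * ((d:ℝ) - j - 1)) = (1 - (j:ℝ)/d) ^ (2 * m * d) := by
        rw [← Real.rpow_add hb1]; ring_nf
      have hch : (Nat.choose (d - 1) j : ℝ) ≤ (d:ℝ) ^ j / (Nat.factorial j) := by
        calc (Nat.choose (d - 1) j : ℝ) ≤ ((d-1:ℕ):ℝ) ^ j / (Nat.factorial j) :=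
              Nat.choose_le_pow_div j (d-1)
          _ ≤ (d:ℝ) ^ j / (Nat.factorial j) := by
              gcongr
              exact_mod_cast Nat.sub_le d 1
      unfold sigmaIITerm
      calc (1 - (j:ℝ)/d) ^ (2 * m * ((j:ℝ) + 1)) *
            (1 - ((j:ℝ)+1)/d) ^ (2 * m * ((d:ℝ) - j - 1)) * (Nat.choose (d - 1) j : ℝ)
          ≤ (1 - (j:ℝ)/d) ^ (2 * m * ((j:ℝ) + 1)) *
            (1 - (j:ℝ)/d) ^ (2 * m * ((d:ℝ) - j - 1)) *
            ((d:ℝ) ^ j / (Nat.factorial j : ℝ)) := by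
            apply mul_le_mul
            · exact mul_le_mul_of_nonneg_left h1 (Real.rpow_nonneg hb1.le _)
            · exact hch
            · positivity
            · positivity
        _ = (1 - (j:ℝ)/d) ^ (2 * m * d) * ((d:ℝ) ^ j / (Nat.factorial j : ℝ)) := by
            rw [h2]
        _ = (1 - (j:ℝ)/d) ^ (2 * m * d) * (d:ℝ) ^ j / (Nat.factorial j : ℝ) := by ring
    · -- second inequality
      have h3 : (1 - (j:ℝ)/d) ≤ Real.exp (-((j:ℝ)/d)) := by
        have := Real.add_one_le_exp (-((j:ℝ)/d))
        linarith
      have h4 : (1 - (j:ℝ)/d) ^ (2 * m * d) ≤ Real.exp (-(2 * m * j)) := by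
        calc (1 - (j:ℝ)/d) ^ (2 * m * d) ≤ (Real.exp (-((j:ℝ)/d))) ^ (2 * m * d) :=
              Real.rpow_le_rpow hb1.le h3 (by positivity)
          _ = Real.exp (-((j:ℝ)/d) * (2 * m * d)) := by rw [← Real.exp_mul]
          _ = Real.exp (-(2 * m * j)) := by
              congr 1
              field_simp
      have h5 : (d:ℝ) ^ j = Real.exp ((j:ℝ) * Real.log d) := by
        rw [mul_comm, Real.exp_mul, Real.exp_log hdpos, Real.rpow_natCast]
      rw [Real.exp_add, h5]
      gcongr
  refine ⟨hmain, fun c hc => ?_⟩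
  have hlogd : 0 < Real.log d := Real.log_pos (by exact_mod_cast (by omega : 1 < d))
  have hm : 0 < (Real.log d + c) / 2 := by linarith
  obtain ⟨h1, h2⟩ := hmain _ hm
  calc sigmaIITerm d j ((Real.log d + c) / 2) ≤ _ := h1
    _ ≤ Real.exp (-(2 * ((Real.log d + c) / 2) * j) + j * Real.log d) / (Nat.factorial j) := h2
    _ = Real.exp (-(c * j)) / (Nat.factorial j) := by
        rw [show -(2 * ((Real.log d + c) / 2) * (j:ℝ)) + j * Real.log d = -(c * j) by ring]
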